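/- Let T be a quantum torsor over a commutative ring K, with structure map μ : T → T ⊗ T^{op} ⊗ T written μ(x) = x⁽¹⁾ ⊗ x⁽²⁾ ⊗ x⁽³⁾. Then the map D : T ⊗ T → T ⊗ T ⊗ T defined by D(x ⊗ y) = x y⁽¹⁾ ⊗ y⁽²⁾ ⊗ y⁽³⁾ is a left T-linear map satisfying the descent datum conditions: (id_T ⊗ D)∘D = (id_T ⊗ 1_T ⊗ id_{T⊗T})∘D and γ ∘ D = id_{T⊗T}, where γ is the multiplication action of T on T ⊗ T. -/
import Mathlib


open TensorProduct

/-- Forget the opposite-algebra structure in the middle factor: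
`(T ⊗ T^op) ⊗ T → (T ⊗ T) ⊗ T`. -/
noncomputable def torsorForget (K T : Type*) [CommRing K] [Ring T] [Algebra K T] :
    ((T ⊗[K] Tᵐᵒᵖ) ⊗[K] T) →ₗ[K] (T ⊗[K] T) ⊗[K] T :=
  LinearMap.rTensor T
    (LinearMap.lTensor T (MulOpposite.opLinearEquiv K).symm.toLinearMap)

/-- The underlying `K`-linear map `T → (T ⊗ T) ⊗ T` of the torsor structure map
`μ : T → T ⊗ T^op ⊗ T`, written `ν(x) = x⁽¹⁾ ⊗ x⁽²⁾ ⊗ x⁽³⁾`. -/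
noncomputable def torsorNu (K T : Type*) [CommRing K] [Ring T] [Algebra K T]
    (μ : T →ₐ[K] (T ⊗[K] Tᵐᵒᵖ) ⊗[K] T) : T →ₗ[K] (T ⊗[K] T) ⊗[K] T :=
  torsorForget K T ∘ₗ μ.toLinearMap

/-- The map `D : T ⊗ T → T ⊗ T ⊗ T`, `D(x ⊗ y) = x y⁽¹⁾ ⊗ y⁽²⁾ ⊗ y⁽³⁾`. -/
noncomputable def torsorDescent (K T : Type*) [CommRing K] [Ring T] [Algebra K T]
    (μ : T →ₐ[K] (T ⊗[K] Tᵐᵒᵖ) ⊗[K] T) : (T ⊗[K] T) →ₗ[K] (T ⊗[K] T) ⊗[K] T :=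
  LinearMap.rTensor T (LinearMap.rTensor T (LinearMap.mul' K T)) ∘ₗ
    LinearMap.rTensor T (TensorProduct.assoc K T T T).symm.toLinearMap ∘ₗ
    (TensorProduct.assoc K T (T ⊗[K] T) T).symm.toLinearMap ∘ₗ
    LinearMap.lTensor T (torsorNu K T μ)

section TorsorAux

variable (K T : Type*) [CommRing K] [Ring T] [Algebra K T]

/-- The "tail" of the descent map: `x ⊗ ((a ⊗ b) ⊗ c) ↦ (x a ⊗ b) ⊗ c`. -/
noncomputable def torsorTail : (T ⊗[K] ((T ⊗[K] T) ⊗[K] T)) →ₗ[K] (T ⊗[K] T) ⊗[K] T :=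
  LinearMap.rTensor T (LinearMap.rTensor T (LinearMap.mul' K T)) ∘ₗ
    LinearMap.rTensor T (TensorProduct.assoc K T T T).symm.toLinearMap ∘ₗ
    (TensorProduct.assoc K T (T ⊗[K] T) T).symm.toLinearMap

variable {K T}

lemma torsorTail_comp_mk (x : T) :
    torsorTail K T ∘ₗ TensorProduct.mk K T ((T ⊗[K] T) ⊗[K] T) x =
      LinearMap.rTensor T (LinearMap.rTensor T (LinearMap.mulLeft K x)) := by
  ext a b c
  simp [torsorTail, assoc_symm_tmul, LinearMap.mul'_apply]

lemma torsorTail_tmul (x : T) (w : (T ⊗[K] T) ⊗[K] T) :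
    torsorTail K T (x ⊗ₜ[K] w) =
      LinearMap.rTensor T (LinearMap.rTensor T (LinearMap.mulLeft K x)) w := by
  have := congrArg (fun f => f w) (torsorTail_comp_mk (K := K) (T := T) x)
  simpa using this

variable (μ : T →ₐ[K] (T ⊗[K] Tᵐᵒᵖ) ⊗[K] T)

lemma torsorDescent_tmul (x y : T) :
    torsorDescent K T μ (x ⊗ₜ[K] y) =
      LinearMap.rTensor T (LinearMap.rTensor T (LinearMap.mulLeft K x))
        (torsorNu K T μ y) := by
  rw [← torsorTail_tmul]
  simp [torsorDescent, torsorTail]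

lemma torsor_mul_tmul_one_one (a : T) (w : (T ⊗[K] T) ⊗[K] T) :
    ((a ⊗ₜ[K] (1 : T)) ⊗ₜ[K] (1 : T)) * w =
      LinearMap.rTensor T (LinearMap.rTensor T (LinearMap.mulLeft K a)) w := by
  have h : LinearMap.mulLeft K ((a ⊗ₜ[K] (1 : T)) ⊗ₜ[K] (1 : T)) =
      LinearMap.rTensor T (LinearMap.rTensor T (LinearMap.mulLeft K a)) := by
    ext u b c
    simp [Algebra.TensorProduct.tmul_mul_tmul]
  exact congrArg (fun f => f w) h

lemma torsor_lemB (f : (T ⊗[K] T) →ₗ[K] (T ⊗[K] T) ⊗[K] T) (x : T) :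
    LinearMap.lTensor T f ∘ₗ (TensorProduct.assoc K T T T).toLinearMap ∘ₗ
        LinearMap.rTensor T (LinearMap.rTensor T (LinearMap.mulLeft K x)) =
      LinearMap.rTensor ((T ⊗[K] T) ⊗[K] T) (LinearMap.mulLeft K x) ∘ₗ
        LinearMap.lTensor T f ∘ₗ (TensorProduct.assoc K T T T).toLinearMap := by
  ext a b c
  simp

lemma torsor_lemC :
    LinearMap.lTensor T (torsorDescent K T μ) ∘ₗ (TensorProduct.assoc K T T T).toLinearMap =
      LinearMap.lTensor T (torsorTail K T) ∘ₗ
        (TensorProduct.assoc K T T ((T ⊗[K] T) ⊗[K] T)).toLinearMap ∘ₗ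
        LinearMap.lTensor (T ⊗[K] T) (torsorNu K T μ) := by
  ext a b c
  simp [torsorDescent, torsorTail]

lemma torsor_lemG (b c : T) :
    LinearMap.lTensor T (torsorTail K T) ∘ₗ
        (TensorProduct.assoc K T T ((T ⊗[K] T) ⊗[K] T)).toLinearMap ∘ₗ
        (TensorProduct.assoc K (T ⊗[K] T) (T ⊗[K] T) T).toLinearMap ∘ₗ
        LinearMap.rTensor T (TensorProduct.assoc K (T ⊗[K] T) T T).toLinearMap ∘ₗ
        (TensorProduct.mk K (((T ⊗[K] T) ⊗[K] T) ⊗[K] T) T).flip c ∘ₗ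
        (TensorProduct.mk K ((T ⊗[K] T) ⊗[K] T) T).flip b =
      LinearMap.lTensor T
          ((TensorProduct.mk K (T ⊗[K] T) T).flip c ∘ₗ (TensorProduct.mk K T T).flip b) ∘ₗ
        LinearMap.lTensor T (LinearMap.mul' K T) ∘ₗ
        (TensorProduct.assoc K T T T).toLinearMap := by
  ext a1 a2 a3
  simp [torsorTail_tmul, LinearMap.mul'_apply]

variable {μ}

lemma torsor_lemStar
    (h_one_left : ∀ t : T,
      (LinearMap.lTensor T (LinearMap.mul' K T))
        ((TensorProduct.assoc K T T T) (torsorNu K T μ t)) = t ⊗ₜ[K] (1 : T)) :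
    LinearMap.lTensor T (torsorTail K T) ∘ₗ
        (TensorProduct.assoc K T T ((T ⊗[K] T) ⊗[K] T)).toLinearMap ∘ₗ
        (TensorProduct.assoc K (T ⊗[K] T) (T ⊗[K] T) T).toLinearMap ∘ₗ
        LinearMap.rTensor T (TensorProduct.assoc K (T ⊗[K] T) T T).toLinearMap ∘ₗ
        LinearMap.rTensor T (LinearMap.rTensor T (torsorNu K T μ)) =
      LinearMap.lTensor T (LinearMap.rTensor T (TensorProduct.mk K T T 1)) ∘ₗ
        (TensorProduct.assoc K T T T).toLinearMap := by
  ext a b c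
  have hG := congrArg (fun f => f (torsorNu K T μ a)) (torsor_lemG (K := K) (T := T) b c)
  simp only [TensorProduct.AlgebraTensorModule.curry_apply, TensorProduct.curry_apply,
    LinearMap.coe_restrictScalars, LinearMap.comp_apply, LinearEquiv.coe_coe,
    LinearMap.rTensor_tmul, LinearMap.flip_apply, TensorProduct.mk_apply] at hG ⊢
  rw [hG, h_one_left a]
  simp

lemma torsor_lemInv
    (hcoassoc : ∀ t : T,
      (LinearMap.rTensor T (LinearMap.rTensor T (torsorNu K T μ))) (torsorNu K T μ t) =
        (LinearMap.rTensor T (TensorProduct.assoc K (T ⊗[K] T) T T).symm.toLinearMap)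
          ((TensorProduct.assoc K (T ⊗[K] T) (T ⊗[K] T) T).symm
            ((LinearMap.lTensor (T ⊗[K] T) (torsorNu K T μ)) (torsorNu K T μ t))))
    (y : T) :
    LinearMap.lTensor (T ⊗[K] T) (torsorNu K T μ) (torsorNu K T μ y) =
      (TensorProduct.assoc K (T ⊗[K] T) (T ⊗[K] T) T)
        (LinearMap.rTensor T (TensorProduct.assoc K (T ⊗[K] T) T T).toLinearMap
          (LinearMap.rTensor T (LinearMap.rTensor T (torsorNu K T μ))
            (torsorNu K T μ y))) := by
  rw [hcoassoc y, ← LinearMap.rTensor_comp_apply]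
  simp

end TorsorAux

/-- Let `T` be a quantum torsor over `K` with structure map `μ : T → T ⊗ T^op ⊗ T`
(an algebra morphism satisfying coassociativity, `x⁽¹⁾x⁽²⁾ ⊗ x⁽³⁾ = 1 ⊗ x` and
`x⁽¹⁾ ⊗ x⁽²⁾x⁽³⁾ = x ⊗ 1`).  Then `D(x ⊗ y) = x y⁽¹⁾ ⊗ y⁽²⁾ ⊗ y⁽³⁾` is a left `T`-linear
map satisfying the descent datum conditions
`(id_T ⊗ D) ∘ D = (id_T ⊗ 1_T ⊗ id_{T⊗T}) ∘ D` and `γ ∘ D = id_{T⊗T}`, where `γ` is the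
multiplication action of `T` on `T ⊗ T`. -/
theorem torsor_descent_datum (K T : Type*) [CommRing K] [Ring T] [Algebra K T]
    (μ : T →ₐ[K] (T ⊗[K] Tᵐᵒᵖ) ⊗[K] T)
    (hcoassoc : ∀ t : T,
      (LinearMap.rTensor T (LinearMap.rTensor T (torsorNu K T μ))) (torsorNu K T μ t) =
        (LinearMap.rTensor T (TensorProduct.assoc K (T ⊗[K] T) T T).symm.toLinearMap)
          ((TensorProduct.assoc K (T ⊗[K] T) (T ⊗[K] T) T).symm
            ((LinearMap.lTensor (T ⊗[K] T) (torsorNu K T μ)) (torsorNu K T μ t))))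
    (h_one_right : ∀ t : T,
      (LinearMap.rTensor T (LinearMap.mul' K T)) (torsorNu K T μ t) = 1 ⊗ₜ[K] t)
    (h_one_left : ∀ t : T,
      (LinearMap.lTensor T (LinearMap.mul' K T))
        ((TensorProduct.assoc K T T T) (torsorNu K T μ t)) = t ⊗ₜ[K] (1 : T)) :
    (∀ (a : T) (z : T ⊗[K] T),
      torsorDescent K T μ ((a ⊗ₜ[K] (1 : T)) * z) =
        ((a ⊗ₜ[K] (1 : T)) ⊗ₜ[K] (1 : T)) * torsorDescent K T μ z) ∧
    (∀ z : T ⊗[K] T,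
      (LinearMap.lTensor T (torsorDescent K T μ))
          ((TensorProduct.assoc K T T T) (torsorDescent K T μ z)) =
        (LinearMap.lTensor T (LinearMap.rTensor T (TensorProduct.mk K T T 1)))
          ((TensorProduct.assoc K T T T) (torsorDescent K T μ z))) ∧
    (∀ z : T ⊗[K] T,
      (LinearMap.rTensor T (LinearMap.mul' K T)) (torsorDescent K T μ z) = z) := by
  refine ⟨?_, ?_, ?_⟩
  · -- left T-linearity
    intro a z
    induction z using TensorProduct.induction_on with
    | zero => simp
    | add z1 z2 h1 h2 => simp only [mul_add, map_add, h1, h2]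
    | tmul x y =>
      rw [Algebra.TensorProduct.tmul_mul_tmul, one_mul, torsorDescent_tmul,
        torsorDescent_tmul, torsor_mul_tmul_one_one,
        LinearMap.mulLeft_mul (R := K) (a := a) (b := x), LinearMap.rTensor_comp,
        LinearMap.rTensor_comp, LinearMap.comp_apply]
  · -- descent datum cocycle condition
    intro z
    induction z using TensorProduct.induction_on with
    | zero => simp
    | add z1 z2 h1 h2 => simp only [map_add, h1, h2]
    | tmul x y =>
      rw [torsorDescent_tmul]
      have hstar : LinearMap.lTensor T (torsorDescent K T μ)
          ((TensorProduct.assoc K T T T) (torsorNu K T μ y)) =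
          LinearMap.lTensor T (LinearMap.rTensor T (TensorProduct.mk K T T 1))
          ((TensorProduct.assoc K T T T) (torsorNu K T μ y)) := by
        have h1 := congrArg (fun f => f (torsorNu K T μ y)) (torsor_lemC μ)
        have h2 := congrArg (fun f => f (torsorNu K T μ y)) (torsor_lemStar h_one_left)
        simp only [LinearMap.comp_apply, LinearEquiv.coe_coe] at h1 h2
        rw [h1, torsor_lemInv hcoassoc y, h2]
      have hb1 := congrArg (fun f => f (torsorNu K T μ y))
        (torsor_lemB (torsorDescent K T μ) x)
      have hb2 := congrArg (fun f => f (torsorNu K T μ y))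
        (torsor_lemB (LinearMap.rTensor T (TensorProduct.mk K T T 1)) x)
      simp only [LinearMap.comp_apply, LinearEquiv.coe_coe] at hb1 hb2
      rw [hb1, hb2, hstar]
  · -- γ ∘ D = id
    intro z
    induction z using TensorProduct.induction_on with
    | zero => simp
    | add z1 z2 h1 h2 => simp only [map_add, h1, h2]
    | tmul x y =>
      rw [torsorDescent_tmul]
      have key : (LinearMap.mul' K T) ∘ₗ LinearMap.rTensor T (LinearMap.mulLeft K x) =
          (LinearMap.mulLeft K x) ∘ₗ LinearMap.mul' K T := by
        ext a b; simp [mul_assoc]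
      calc (LinearMap.rTensor T (LinearMap.mul' K T))
            ((LinearMap.rTensor T (LinearMap.rTensor T (LinearMap.mulLeft K x)))
              (torsorNu K T μ y))
          = LinearMap.rTensor T (LinearMap.mulLeft K x)
              ((LinearMap.rTensor T (LinearMap.mul' K T)) (torsorNu K T μ y)) := by
            rw [← LinearMap.comp_apply, ← LinearMap.rTensor_comp, key,
              LinearMap.rTensor_comp, LinearMap.comp_apply]
        _ = x ⊗ₜ[K] y := by rw [h_one_right y]; simp
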